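/- (Marginal prices bound the range of α-scalings.) Let S : ℝⁿ → ℝ ∪ {+∞} be convex lsc with S(0) = 0, S' the greatest lsc sublinear minorant of S and S^∞ its horizon function. Then for every α > 0 and every x ∈ ℝⁿ: S'(x) ≤ (α⋆S)(x) ≤ S^∞(x), where (α⋆S)(x) = αS(x/α); consequently for the deterministic hedgeable-claims sets, αC(S,D) = C(α⋆S, αD) ⊆ C(S', D') and C(S^∞, D^∞) ⊆ αC(S,D) for all α > 0, where D is closed convex with 0 ∈ D, D' = cl ⋃_{α>0} αD and D^∞ = ⋂_{α>0} αD. -/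

import Mathlib

open scoped Pointwise

/-- The set of claim processes superhedgeable at zero cost (see paper, Section 3). -/
def hedgeSet {n T : ℕ} (S : Fin (T+1) → EuclideanSpace ℝ (Fin n) → EReal)
    (D : Fin (T+1) → Set (EuclideanSpace ℝ (Fin n))) : Set (Fin (T+1) → ℝ) :=
  {c | ∃ x : ℕ → EuclideanSpace ℝ (Fin n), x T = 0 ∧
    ∀ t : Fin (T+1), x t ∈ D t ∧
      S t (x t - (if (t : ℕ) = 0 then 0 else x ((t : ℕ) - 1))) + ((c t : ℝ) : EReal) ≤ 0}

/-- Monotonicity of the hedge set: decreasing the cost and enlarging the constraints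
enlarges the hedge set. -/
lemma hedge_mono {n T : ℕ} {S₁ S₂ : Fin (T+1) → EuclideanSpace ℝ (Fin n) → EReal}
    {D₁ D₂ : Fin (T+1) → Set (EuclideanSpace ℝ (Fin n))}
    (hS : ∀ t x, S₂ t x ≤ S₁ t x) (hD : ∀ t, D₁ t ⊆ D₂ t) :
    hedgeSet S₁ D₁ ⊆ hedgeSet S₂ D₂ := by
  rintro c ⟨x, hxT, hx⟩
  exact ⟨x, hxT, fun t => ⟨hD t (hx t).1,
    le_trans (add_le_add_left (hS t _) _) (hx t).2⟩⟩

/-- One inclusion of the scaling identity. -/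
lemma smul_hedge_subset {n T : ℕ} (S : Fin (T+1) → EuclideanSpace ℝ (Fin n) → EReal)
    (D : Fin (T+1) → Set (EuclideanSpace ℝ (Fin n)))
    (hnebot : ∀ t x, S t x ≠ ⊥) {α : ℝ} (hα : 0 < α) :
    α • hedgeSet S D ⊆
      hedgeSet (fun t x => (α : EReal) * S t (α⁻¹ • x)) (fun t => α • D t) := by
  rintro c ⟨c₀, ⟨x, hxT, hx⟩, rfl⟩
  refine ⟨fun k => α • x k, by show α • x T = 0; rw [hxT, smul_zero], fun t => ?_⟩
  obtain ⟨hxD, hle⟩ := hx t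
  refine ⟨Set.smul_mem_smul_set hxD, ?_⟩
  set Δ := x t - (if (t : ℕ) = 0 then 0 else x ((t : ℕ) - 1)) with hΔdef
  have h1 : α • x t - (if (t : ℕ) = 0 then (0 : EuclideanSpace ℝ (Fin n))
      else α • x ((t : ℕ) - 1)) = α • Δ := by
    rw [hΔdef]; split <;> simp [smul_sub]
  simp only [h1, smul_smul, inv_mul_cancel₀ hα.ne', one_smul, Pi.smul_apply, smul_eq_mul]
  have hne_top : S t Δ ≠ ⊤ := by
    intro h
    rw [h, EReal.top_add_coe] at hle
    exact absurd hle (by simp)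
  rw [← EReal.coe_toReal hne_top (hnebot t Δ)] at hle ⊢
  rw [← EReal.coe_add, EReal.coe_nonpos] at hle
  rw [← EReal.coe_mul, ← EReal.coe_add, EReal.coe_nonpos]
  nlinarith

/-- For convex lsc costs `Sₜ` (vanishing at `0`) with lsc sublinear hull
`S'` and horizon functions `S^∞`, every scaling satisfies `S' ≤ α⋆S ≤ S^∞`; consequently
`α C(S,D) = C(α⋆S, αD) ⊆ C(S',D')` and `C(S^∞,D^∞) ⊆ α C(S,D)` for all `α > 0`, where
`D' = cl ⋃_{α>0} αD` and `D^∞ = ⋂_{α>0} αD`. -/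
theorem stmt_19 (n T : ℕ)
    (S : Fin (T+1) → EuclideanSpace ℝ (Fin n) → EReal)
    (D : Fin (T+1) → Set (EuclideanSpace ℝ (Fin n)))
    (hconv : ∀ t, ∀ x y : EuclideanSpace ℝ (Fin n), ∀ a b : ℝ, 0 ≤ a → 0 ≤ b → a + b = 1 →
      S t (a • x + b • y) ≤ (a : EReal) * S t x + (b : EReal) * S t y)
    (hlsc : ∀ t, LowerSemicontinuous (S t))
    (hS0 : ∀ t, S t 0 = 0) (hnebot : ∀ t x, S t x ≠ ⊥)
    (hDcl : ∀ t, IsClosed (D t)) (hDconv : ∀ t, Convex ℝ (D t))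
    (hD0 : ∀ t, (0 : EuclideanSpace ℝ (Fin n)) ∈ D t)
    (S' Sinf : Fin (T+1) → EuclideanSpace ℝ (Fin n) → EReal)
    (hS' : ∀ t x, S' t x = Filter.liminf
      (fun x' : EuclideanSpace ℝ (Fin n) =>
        ⨅ α : Set.Ioi (0:ℝ), ((α : ℝ) : EReal) * S t (((α : ℝ))⁻¹ • x')) (nhds x))
    (hSinf : ∀ t x, Sinf t x =
      ⨆ α : Set.Ioi (0:ℝ), ((α : ℝ) : EReal) * S t (((α : ℝ))⁻¹ • x))
    (D' Dinf : Fin (T+1) → Set (EuclideanSpace ℝ (Fin n)))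
    (hD' : ∀ t, D' t = closure (⋃ α ∈ Set.Ioi (0:ℝ), α • D t))
    (hDinf : ∀ t, Dinf t = ⋂ α ∈ Set.Ioi (0:ℝ), α • D t) :
    (∀ t, ∀ x : EuclideanSpace ℝ (Fin n), ∀ α : ℝ, 0 < α →
      S' t x ≤ (α : EReal) * S t (α⁻¹ • x) ∧
      (α : EReal) * S t (α⁻¹ • x) ≤ Sinf t x) ∧
    (∀ α : ℝ, 0 < α →
      α • hedgeSet S D =
          hedgeSet (fun t x => (α : EReal) * S t (α⁻¹ • x)) (fun t => α • D t) ∧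
      α • hedgeSet S D ⊆ hedgeSet S' D' ∧
      hedgeSet Sinf Dinf ⊆ α • hedgeSet S D) := by
  have part1 : ∀ t, ∀ x : EuclideanSpace ℝ (Fin n), ∀ α : ℝ, 0 < α →
      S' t x ≤ (α : EReal) * S t (α⁻¹ • x) ∧
      (α : EReal) * S t (α⁻¹ • x) ≤ Sinf t x := by
    intro t x α hα
    constructor
    · rw [hS' t x]
      have h1 : (⨅ β : Set.Ioi (0:ℝ), ((β : ℝ) : EReal) * S t (((β : ℝ))⁻¹ • x))
          ≤ (α : EReal) * S t (α⁻¹ • x) :=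
        iInf_le (fun β : Set.Ioi (0:ℝ) => ((β : ℝ) : EReal) * S t (((β : ℝ))⁻¹ • x)) ⟨α, hα⟩
      refine Filter.liminf_le_of_frequently_le' ?_
      refine Filter.Frequently.filter_mono ?_ (pure_le_nhds x)
      exact (Filter.eventually_pure.2 h1).frequently
    · rw [hSinf t x]
      exact le_iSup (fun β : Set.Ioi (0:ℝ) => ((β : ℝ) : EReal) * S t (((β : ℝ))⁻¹ • x)) ⟨α, hα⟩
  refine ⟨part1, fun α hα => ?_⟩
  have hnebot' : ∀ t x, (α : EReal) * S t (α⁻¹ • x) ≠ ⊥ := by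
    intro t x
    rcases eq_or_ne (S t (α⁻¹ • x)) ⊤ with h | h
    · rw [h, EReal.mul_top_of_pos (by exact_mod_cast hα)]
      simp
    · rw [← EReal.coe_toReal h (hnebot t _), ← EReal.coe_mul]
      exact EReal.coe_ne_bot _
  have heq : α • hedgeSet S D =
      hedgeSet (fun t x => (α : EReal) * S t (α⁻¹ • x)) (fun t => α • D t) := by
    refine Set.Subset.antisymm (smul_hedge_subset S D hnebot hα) ?_
    have h2 := smul_hedge_subset (fun t x => (α : EReal) * S t (α⁻¹ • x))
      (fun t => α • D t) hnebot' (inv_pos.2 hα)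
    have hfun : (fun (t : Fin (T+1)) (x : EuclideanSpace ℝ (Fin n)) =>
        ((α⁻¹ : ℝ) : EReal) * ((α : EReal) * S t (α⁻¹ • ((α⁻¹)⁻¹ • x)))) = S := by
      funext t x
      rw [inv_inv, smul_smul, inv_mul_cancel₀ hα.ne', one_smul, ← mul_assoc,
        ← EReal.coe_mul, inv_mul_cancel₀ hα.ne', EReal.coe_one, one_mul]
    have hsets : (fun t : Fin (T+1) => α⁻¹ • α • D t) = D := by
      funext t
      rw [smul_smul, inv_mul_cancel₀ hα.ne', one_smul]
    rw [hfun, hsets] at h2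
    intro c hc
    exact ⟨α⁻¹ • c, h2 ⟨c, hc, rfl⟩, smul_inv_smul₀ hα.ne' c⟩
  refine ⟨heq, ?_, ?_⟩
  · rw [heq]
    refine hedge_mono (fun t x => (part1 t x α hα).1) (fun t => ?_)
    rw [hD' t]
    exact fun y hy => subset_closure (Set.mem_biUnion hα hy)
  · rw [heq]
    refine hedge_mono (fun t x => (part1 t x α hα).2) (fun t => ?_)
    rw [hDinf t]
    exact Set.biInter_subset_of_mem hα
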